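/- arXiv:1802.09478 — 3 statements merged into one kernel-verified Lean document; each statement's English description precedes it below -/
import Mathlib

section
/- Let G = (V, E) be a finite undirected graph without isolated vertices, and let h : V → [0,1] be a family of i.i.d. uniform random variables (almost surely injective). Define the representative of each vertex v as r(v) = argmin over w in the closed neighbourhood N[v] of h(w). Then the expected number of vertices in the image of r is at most (3/4)|V|. -/
open MeasureTheory Finset Function
open scoped ENNReal NNReal

namespace RepAux

noncomputable def nu : Measure ℝ := volume.restrict (Set.Icc 0 1)

instance : IsProbabilityMeasure (nu : Measure ℝ) := by
  constructor; simp [nu, Real.volume_Icc]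

lemma nu_Ici {t : ℝ} (h0 : 0 ≤ t) (h1 : t ≤ 1) : nu (Set.Ici t) = ENNReal.ofReal (1 - t) := by
  rw [nu, Measure.restrict_apply' measurableSet_Icc]
  have : Set.Ici t ∩ Set.Icc 0 1 = Set.Icc t 1 := by
    ext x
    simp only [Set.mem_inter_iff, Set.mem_Ici, Set.mem_Icc]
    constructor
    · rintro ⟨ha, hb, hc⟩; exact ⟨ha, hc⟩
    · rintro ⟨ha, hb⟩; exact ⟨ha, le_trans h0 ha, hb⟩
  rw [this, Real.volume_Icc]

lemma nu_singleton (t : ℝ) : nu {t} = 0 := by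
  rw [nu, Measure.restrict_apply' measurableSet_Icc]
  exact measure_mono_null Set.inter_subset_left Real.volume_singleton

section Pi

variable {V : Type*} [Fintype V] [DecidableEq V]

/-- The product measure. -/
noncomputable def mu : Measure (V → ℝ) := Measure.pi fun _ : V => nu

instance : IsProbabilityMeasure (mu : Measure (V → ℝ)) := by
  unfold mu; infer_instance

/-- Monotone wrt increasing `v`-coordinate and decreasing other coordinates. -/
def Mono2 (v : V) (f : (V → ℝ) → ℝ≥0∞) : Prop :=
  ∀ ⦃g g' : V → ℝ⦄, g v ≤ g' v → (∀ u, u ≠ v → g' u ≤ g u) → f g ≤ f g'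

/-- One-dimensional Chebyshev correlation inequality. -/
lemma cheb {F G : ℝ → ℝ≥0∞} (hF : Measurable F) (hG : Measurable G)
    (hdir : (Monotone F ∧ Monotone G) ∨ (Antitone F ∧ Antitone G)) :
    (∫⁻ t, F t ∂nu) * (∫⁻ t, G t ∂nu) ≤ ∫⁻ t, F t * G t ∂nu := by
  have base : ∀ x y c d : ℝ≥0∞, x ≤ y → c ≤ d → x * d + y * c ≤ x * c + y * d := by
    intro x y c d hxy hcd
    obtain ⟨e, rfl⟩ := exists_add_of_le hxy
    obtain ⟨f, rfl⟩ := exists_add_of_le hcd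
    calc x * (c + f) + (x + e) * c = (x*c + x*c + x*f + e*c) := by ring
      _ ≤ (x*c + x*c + x*f + e*c) + e*f := le_self_add
      _ = x * c + (x + e) * (c + f) := by ring
  have key : ∀ a b : ℝ, F a * G b + F b * G a ≤ F a * G a + F b * G b := by
    intro a b
    have comm : ∀ p q r s : ℝ≥0∞, p + q ≤ r + s → q + p ≤ s + r := by
      intro p q r s h; rw [add_comm q p, add_comm s r]; exact h
    rcases le_total a b with hab | hab
    · rcases hdir with ⟨hF', hG'⟩ | ⟨hF', hG'⟩
      · exact base _ _ _ _ (hF' hab) (hG' hab)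
      · exact comm _ _ _ _ (base _ _ _ _ (hF' hab) (hG' hab))
    · rcases hdir with ⟨hF', hG'⟩ | ⟨hF', hG'⟩
      · exact comm _ _ _ _ (base _ _ _ _ (hF' hab) (hG' hab))
      · exact base _ _ _ _ (hF' hab) (hG' hab)
  have h2 : (2:ℝ≥0∞) * ((∫⁻ t, F t ∂nu) * (∫⁻ t, G t ∂nu)) ≤ 2 * ∫⁻ t, F t * G t ∂nu := by
    have hL : ∫⁻ a, ∫⁻ b, (F a * G b + F b * G a) ∂nu ∂nu
        = 2 * ((∫⁻ t, F t ∂nu) * (∫⁻ t, G t ∂nu)) := by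
      have inner : ∀ a, ∫⁻ b, (F a * G b + F b * G a) ∂nu
          = F a * (∫⁻ t, G t ∂nu) + (∫⁻ t, F t ∂nu) * G a := by
        intro a
        rw [lintegral_add_left (hG.const_mul _), lintegral_const_mul _ hG,
          lintegral_mul_const _ hF]
      rw [lintegral_congr inner, lintegral_add_left (hF.mul_const _),
        lintegral_mul_const _ hF, lintegral_const_mul _ hG]
      ring
    have hR : ∫⁻ a, ∫⁻ b, (F a * G a + F b * G b) ∂nu ∂nu
        = 2 * ∫⁻ t, F t * G t ∂nu := by
      have inner : ∀ a, ∫⁻ b, (F a * G a + F b * G b) ∂nu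
          = F a * G a + ∫⁻ t, F t * G t ∂nu := by
        intro a
        rw [lintegral_add_left measurable_const, lintegral_const]
        simp
      rw [lintegral_congr inner, lintegral_add_right _ measurable_const,
        lintegral_const]
      simp; ring
    rw [← hL, ← hR]
    exact lintegral_mono fun a => lintegral_mono fun b => key a b
  exact (ENNReal.mul_le_mul_iff_right (by norm_num) (by norm_num)).mp h2

lemma Mono2.lmarginal {v : V} {f : (V → ℝ) → ℝ≥0∞} (hf : Mono2 v f) (s : Finset V) :
    Mono2 v (∫⋯∫⁻_s, f ∂(fun _ : V => nu)) := by
  intro g g' h1 h2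
  refine lintegral_mono fun y => hf ?_ ?_
  · by_cases hv : v ∈ s <;> simp [updateFinset, hv, h1]
  · intro u hu
    by_cases husf : u ∈ s <;> simp [updateFinset, husf, h2 u hu]

lemma mono2_update_self {v : V} {f : (V → ℝ) → ℝ≥0∞} (hf : Mono2 v f) (x : V → ℝ) :
    Monotone fun t => f (update x v t) := by
  intro t t' htt'
  refine hf ?_ ?_
  · simp [htt']
  · intro u hu; simp [update_of_ne hu]

lemma mono2_update_ne {v : V} {f : (V → ℝ) → ℝ≥0∞} (hf : Mono2 v f) (x : V → ℝ)
    {i : V} (hiv : i ≠ v) : Antitone fun t => f (update x i t) := by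
  intro t t' htt'
  refine hf ?_ ?_
  · simp [update_of_ne (Ne.symm hiv)]
  · intro u hu
    rcases eq_or_ne u i with rfl | hui
    · simp [htt']
    · simp [update_of_ne hui]

lemma harris_marg (v : V) (f g : (V → ℝ) → ℝ≥0∞) (hfm : Measurable f) (hgm : Measurable g)
    (hf : Mono2 v f) (hg : Mono2 v g) (s : Finset V) :
    ∀ x, (∫⋯∫⁻_s, f ∂(fun _ : V => nu)) x * (∫⋯∫⁻_s, g ∂(fun _ : V => nu)) x
      ≤ (∫⋯∫⁻_s, (fun h => f h * g h) ∂(fun _ : V => nu)) x := by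
  induction s using Finset.induction_on with
  | empty => intro x; simp
  | @insert i s his IH =>
    intro x
    rw [lmarginal_insert _ hfm his x, lmarginal_insert _ hgm his x,
      lmarginal_insert (fun h => f h * g h) (hfm.mul hgm) his x]
    have hFm : Measurable fun t => (∫⋯∫⁻_s, f ∂(fun _ : V => nu)) (update x i t) :=
      (hfm.lmarginal (fun _ : V => nu)).comp (measurable_update x)
    have hGm : Measurable fun t => (∫⋯∫⁻_s, g ∂(fun _ : V => nu)) (update x i t) :=
      (hgm.lmarginal (fun _ : V => nu)).comp (measurable_update x)
    have hdir : (Monotone (fun t => (∫⋯∫⁻_s, f ∂(fun _ : V => nu)) (update x i t)) ∧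
        Monotone (fun t => (∫⋯∫⁻_s, g ∂(fun _ : V => nu)) (update x i t))) ∨
        (Antitone (fun t => (∫⋯∫⁻_s, f ∂(fun _ : V => nu)) (update x i t)) ∧
        Antitone (fun t => (∫⋯∫⁻_s, g ∂(fun _ : V => nu)) (update x i t))) := by
      rcases eq_or_ne i v with rfl | hiv
      · exact Or.inl ⟨mono2_update_self (hf.lmarginal s) x, mono2_update_self (hg.lmarginal s) x⟩
      · exact Or.inr ⟨mono2_update_ne (hf.lmarginal s) x hiv, mono2_update_ne (hg.lmarginal s) x hiv⟩
    calc (∫⁻ t, (∫⋯∫⁻_s, f ∂(fun _ : V => nu)) (update x i t) ∂nu) *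
        (∫⁻ t, (∫⋯∫⁻_s, g ∂(fun _ : V => nu)) (update x i t) ∂nu)
        ≤ ∫⁻ t, (∫⋯∫⁻_s, f ∂(fun _ : V => nu)) (update x i t) *
            (∫⋯∫⁻_s, g ∂(fun _ : V => nu)) (update x i t) ∂nu := cheb hFm hGm hdir
      _ ≤ ∫⁻ t, (∫⋯∫⁻_s, (fun h => f h * g h) ∂(fun _ : V => nu)) (update x i t) ∂nu :=
          lintegral_mono fun t => IH (update x i t)

/-- Up-set wrt the mixed order. -/
def UpSet2 (v : V) (A : Set (V → ℝ)) : Prop :=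
  ∀ ⦃g g' : V → ℝ⦄, g v ≤ g' v → (∀ u, u ≠ v → g' u ≤ g u) → g ∈ A → g' ∈ A

lemma UpSet2.mono2 {v : V} {A : Set (V → ℝ)} (hA : UpSet2 v A) :
    Mono2 v (A.indicator (1 : (V → ℝ) → ℝ≥0∞)) := by
  intro g g' h1 h2
  by_cases hg : g ∈ A
  · rw [Set.indicator_of_mem hg, Set.indicator_of_mem (hA h1 h2 hg)]
    exact le_rfl
  · rw [Set.indicator_of_notMem hg]; exact zero_le

lemma harris_set (v : V) (A B : Set (V → ℝ)) (hA : MeasurableSet A) (hB : MeasurableSet B)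
    (hA2 : UpSet2 v A) (hB2 : UpSet2 v B) :
    (mu : Measure (V → ℝ)) A * mu B ≤ mu (A ∩ B) := by
  have hAm : Measurable (A.indicator (1 : (V → ℝ) → ℝ≥0∞)) := measurable_one.indicator hA
  have hBm : Measurable (B.indicator (1 : (V → ℝ) → ℝ≥0∞)) := measurable_one.indicator hB
  unfold mu
  rw [← lintegral_indicator_one hA, ← lintegral_indicator_one hB,
    ← lintegral_indicator_one (hA.inter hB)]
  rw [lintegral_eq_lmarginal_univ (μ := fun _ : V => nu) (f := A.indicator 1) (fun _ => (0:ℝ)),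
    lintegral_eq_lmarginal_univ (μ := fun _ : V => nu) (f := B.indicator 1) (fun _ => (0:ℝ)),
    lintegral_eq_lmarginal_univ (μ := fun _ : V => nu) (f := (A ∩ B).indicator 1) (fun _ => (0:ℝ))]
  have := harris_marg v _ _ hAm hBm hA2.mono2 hB2.mono2 Finset.univ (fun _ => (0:ℝ))
  refine le_trans this (le_of_eq ?_)
  congr 1
  ext h
  rw [Set.inter_indicator_one]
  rfl

lemma harris_prod (v : V) (T : Finset V) (B : V → Set (V → ℝ))
    (hB : ∀ w, MeasurableSet (B w)) (h2 : ∀ w, UpSet2 v (B w)) :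
    ∏ w ∈ T, (mu : Measure (V → ℝ)) (B w) ≤ mu (⋂ w ∈ T, B w) := by
  induction T using Finset.induction_on with
  | empty => simp
  | @insert w T hw IH =>
    rw [Finset.prod_insert hw]
    have hTm : MeasurableSet (⋂ u ∈ T, B u) :=
      MeasurableSet.biInter (Finset.countable_toSet T) fun u _ => hB u
    have hTup : UpSet2 v (⋂ u ∈ T, B u) := by
      intro g g' hgv hgu hmem
      rw [Set.mem_iInter₂] at hmem ⊢
      exact fun u hu => h2 u hgv hgu (hmem u hu)
    calc mu (B w) * ∏ u ∈ T, mu (B u) ≤ mu (B w) * mu (⋂ u ∈ T, B u) :=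
          mul_le_mul_right IH _
      _ ≤ mu (B w ∩ ⋂ u ∈ T, B u) := harris_set v _ _ (hB w) hTm (h2 w) hTup
      _ = mu (⋂ u ∈ insert w T, B u) := by rw [Finset.set_biInter_insert]

end Pi
section Comp

variable {V : Type*} [Fintype V] [DecidableEq V]

lemma lmarg_indep (f : (V → ℝ) → ℝ≥0∞) (s : Finset V)
    (hindep : ∀ x y, f (updateFinset x s y) = f x) :
    (∫⋯∫⁻_s, f ∂(fun _ : V => nu)) = f := by
  ext x
  show ∫⁻ y, f (updateFinset x s y) ∂(Measure.pi fun _ : ↥s => nu) = f x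
  simp_rw [hindep x]
  rw [lintegral_const, measure_univ, mul_one]

lemma lmarg_prod_core (g : V → ℝ → ℝ≥0∞) (hg : ∀ u, Measurable (g u)) (S : Finset V) :
    ∀ x, (∫⋯∫⁻_S, (fun h => ∏ u ∈ S, g u (h u)) ∂(fun _ : V => nu)) x
      = ∏ u ∈ S, ∫⁻ b, g u b ∂nu := by
  induction S using Finset.induction_on with
  | empty => intro x; simp
  | @insert w S hw IH =>
    intro x
    have hFm : ∀ (T : Finset V), Measurable (fun h : V → ℝ => ∏ u ∈ T, g u (h u)) := by
      intro T
      exact Finset.measurable_prod _ fun u _ => (hg u).comp (measurable_pi_apply u)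
    rw [lmarginal_insert _ (hFm _) hw x]
    have inner : ∀ t, (∫⋯∫⁻_S, (fun h => ∏ u ∈ insert w S, g u (h u)) ∂(fun _ : V => nu))
        (update x w t) = g w t * ∏ u ∈ S, ∫⁻ b, g u b ∂nu := by
      intro t
      have heq : (∫⋯∫⁻_S, (fun h => ∏ u ∈ insert w S, g u (h u)) ∂(fun _ : V => nu))
          (update x w t)
          = ∫⁻ y, g w t * ((fun h => ∏ u ∈ S, g u (h u))
              (updateFinset (update x w t) S y)) ∂(Measure.pi fun _ : ↥S => nu) := by
        show ∫⁻ y, (fun h => ∏ u ∈ insert w S, g u (h u)) (updateFinset (update x w t) S y)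
            ∂(Measure.pi fun _ : ↥S => nu) = _
        refine lintegral_congr fun y => ?_
        simp only []
        rw [Finset.prod_insert hw]
        congr 1
        have hwS : updateFinset (update x w t) S y w = t := by
          simp [updateFinset, hw]
        rw [hwS]
      have hm : Measurable fun y : (↥S → ℝ) =>
          (fun h : V → ℝ => ∏ u ∈ S, g u (h u)) (updateFinset (update x w t) S y) :=
        (hFm S).comp measurable_updateFinset
      rw [heq, lintegral_const_mul _ hm]
      congr 1
      exact IH (update x w t)
    rw [lintegral_congr inner, lintegral_mul_const _ (hg w), Finset.prod_insert hw]

lemma lmarg_prod (g : V → ℝ → ℝ≥0∞) (hg : ∀ u, Measurable (g u)) (S s : Finset V)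
    (hSs : S ⊆ s) (x : V → ℝ) :
    (∫⋯∫⁻_s, (fun h => ∏ u ∈ S, g u (h u)) ∂(fun _ : V => nu)) x
      = ∏ u ∈ S, ∫⁻ b, g u b ∂nu := by
  have hFm : Measurable (fun h : V → ℝ => ∏ u ∈ S, g u (h u)) :=
    Finset.measurable_prod _ fun u _ => (hg u).comp (measurable_pi_apply u)
  rw [← Finset.union_sdiff_of_subset hSs,
    lmarginal_union (fun _ : V => nu) _ hFm Finset.disjoint_sdiff]
  have hindep : ∀ x y, (fun h : V → ℝ => ∏ u ∈ S, g u (h u)) (updateFinset x (s \ S) y)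
      = (fun h : V → ℝ => ∏ u ∈ S, g u (h u)) x := by
    intro x y
    refine Finset.prod_congr rfl fun u hu => ?_
    have hns : u ∉ s \ S := fun hmem => (Finset.mem_sdiff.mp hmem).2 hu
    simp [updateFinset, hns]
  rw [lmarg_indep (fun h : V → ℝ => ∏ u ∈ S, g u (h u)) (s \ S) hindep]
  exact lmarg_prod_core g hg S x

/-- Main Fubini reduction: integral of a function of `h v` and `(h u)_{u ∈ S}` of product form. -/
lemma lintegral_pair (v : V) (S : Finset V) (hvS : v ∉ S) (φ : ℝ → ℝ → ℝ≥0∞)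
    (hφm : Measurable fun p : ℝ × ℝ => φ p.1 p.2) :
    ∫⁻ h : V → ℝ, (∏ u ∈ S, φ (h v) (h u)) ∂(Measure.pi fun _ : V => nu)
      = ∫⁻ t, ∏ u ∈ S, (∫⁻ b, φ t b ∂nu) ∂nu := by
  have hφ1 : ∀ t : ℝ, Measurable (φ t) := fun t =>
    hφm.comp (measurable_const.prodMk measurable_id)
  have hF : Measurable fun h : V → ℝ => ∏ u ∈ S, φ (h v) (h u) := by
    refine Finset.measurable_prod _ fun u _ => ?_
    exact hφm.comp (Measurable.prodMk (measurable_pi_apply v) (measurable_pi_apply u))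
  rw [lintegral_eq_lmarginal_univ (μ := fun _ : V => nu) (fun _ : V => (0:ℝ))]
  have hins : (Finset.univ : Finset V) = insert v (Finset.univ.erase v) :=
    (Finset.insert_erase (Finset.mem_univ v)).symm
  rw [hins, lmarginal_insert _ hF (Finset.notMem_erase v Finset.univ)]
  refine lintegral_congr fun t => ?_
  have step1 : (∫⋯∫⁻_(Finset.univ.erase v), (fun h => ∏ u ∈ S, φ (h v) (h u))
        ∂(fun _ : V => nu)) (update (fun _ => (0:ℝ)) v t)
      = (∫⋯∫⁻_(Finset.univ.erase v), (fun h => ∏ u ∈ S, φ t (h u))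
        ∂(fun _ : V => nu)) (update (fun _ => (0:ℝ)) v t) := by
    show ∫⁻ y, _ ∂(Measure.pi fun _ : ↥(Finset.univ.erase v) => nu) = ∫⁻ y, _ ∂_
    refine lintegral_congr fun y => ?_
    simp only []
    have hv : updateFinset (update (fun _ => (0:ℝ)) v t) (Finset.univ.erase v) y v = t := by
      simp [updateFinset, Finset.notMem_erase]
    rw [hv]
  rw [step1, lmarg_prod (fun _ b => φ t b) (fun _ => hφ1 t) S _
    (fun u hu => Finset.mem_erase.mpr ⟨fun h => hvS (by rwa [h] at hu), Finset.mem_univ u⟩) _]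

lemma nu_int_pow (k : ℕ) :
    ∫⁻ t, (nu (Set.Ici t))^k ∂nu = ENNReal.ofReal (1/(k+1)) := by
  have hcong : ∀ t ∈ Set.Icc (0:ℝ) 1, (nu (Set.Ici t))^k = ENNReal.ofReal ((1-t)^k) := by
    intro t ht
    rw [nu_Ici ht.1 ht.2, ← ENNReal.ofReal_pow (by linarith [ht.2])]
  have h1 : ∫⁻ t, (nu (Set.Ici t))^k ∂nu
      = ∫⁻ t in Set.Icc (0:ℝ) 1, ENNReal.ofReal ((1-t)^k) ∂volume := by
    rw [nu]
    exact setLIntegral_congr_fun measurableSet_Icc hcong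
  rw [h1]
  have hint : IntegrableOn (fun t : ℝ => (1-t)^k) (Set.Icc 0 1) volume := by
    apply Continuous.integrableOn_Icc
    fun_prop
  have hpos : 0 ≤ᵐ[volume.restrict (Set.Icc (0:ℝ) 1)] (fun t : ℝ => (1-t)^k) := by
    refine (ae_restrict_iff' measurableSet_Icc).mpr (ae_of_all _ fun t ht => ?_)
    exact pow_nonneg (by linarith [ht.2]) k
  rw [← ofReal_integral_eq_lintegral_ofReal hint hpos]
  congr 1
  rw [MeasureTheory.integral_Icc_eq_integral_Ioc, ← intervalIntegral.integral_of_le zero_le_one]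
  have := intervalIntegral.integral_comp_sub_left (a := (0:ℝ)) (b := 1) (fun x => x^k) 1
  simp only [sub_self, sub_zero] at this
  rw [this, integral_pow]
  norm_num

end Comp

section Events

variable {V : Type*} [Fintype V] [DecidableEq V]

lemma measurable_all_ge (v : V) (S : Finset V) :
    MeasurableSet {h : V → ℝ | ∀ u ∈ S, h v ≤ h u} := by
  have : {h : V → ℝ | ∀ u ∈ S, h v ≤ h u} = ⋂ u ∈ S, {h : V → ℝ | h v ≤ h u} := by
    ext h; simp
  rw [this]
  exact MeasurableSet.biInter (Finset.countable_toSet S) fun u _ =>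
    measurableSet_le (measurable_pi_apply v) (measurable_pi_apply u)

lemma measure_all_ge (v : V) (S : Finset V) (hvS : v ∉ S) :
    (mu : Measure (V → ℝ)) {h : V → ℝ | ∀ u ∈ S, h v ≤ h u}
      = ENNReal.ofReal (1/(S.card+1)) := by
  classical
  set φ : ℝ → ℝ → ℝ≥0∞ := fun a b => if a ≤ b then 1 else 0 with hφ
  have hφm : Measurable fun p : ℝ × ℝ => φ p.1 p.2 := by
    apply Measurable.ite (measurableSet_le measurable_fst measurable_snd) <;> fun_prop
  have hind : ∀ h : V → ℝ, ({h : V → ℝ | ∀ u ∈ S, h v ≤ h u}.indicator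
      (1 : (V → ℝ) → ℝ≥0∞)) h = ∏ u ∈ S, φ (h v) (h u) := by
    intro h
    by_cases hh : h ∈ {h : V → ℝ | ∀ u ∈ S, h v ≤ h u}
    · rw [Set.indicator_of_mem hh]
      rw [Finset.prod_eq_one fun u hu => by simp [hφ, hh u hu]]
      rfl
    · rw [Set.indicator_of_notMem hh]
      simp only [Set.mem_setOf_eq, not_forall] at hh
      obtain ⟨u, hu, hlt⟩ := hh
      exact (Finset.prod_eq_zero hu (by simp [hφ, hlt])).symm
  have h1 : (mu : Measure (V → ℝ)) {h : V → ℝ | ∀ u ∈ S, h v ≤ h u}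
      = ∫⁻ h : V → ℝ, ∏ u ∈ S, φ (h v) (h u) ∂(Measure.pi fun _ : V => nu) := by
    rw [show (Measure.pi fun _ : V => nu) = mu from rfl, ← lintegral_indicator_one (measurable_all_ge v S)]
    exact lintegral_congr hind
  rw [h1, lintegral_pair v S hvS φ hφm]
  have hinner : ∀ t : ℝ, (∫⁻ b, φ t b ∂nu) = nu (Set.Ici t) := by
    intro t
    have : (fun b => φ t b) = (Set.Ici t).indicator (1 : ℝ → ℝ≥0∞) := by
      ext b
      rw [Set.indicator_apply]
      simp [hφ, Set.mem_Ici]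
    rw [this, lintegral_indicator_one measurableSet_Ici]
  calc ∫⁻ t, ∏ u ∈ S, (∫⁻ b, φ t b ∂nu) ∂nu
      = ∫⁻ t, (nu (Set.Ici t))^S.card ∂nu := by
        refine lintegral_congr fun t => ?_
        rw [Finset.prod_congr rfl fun u _ => hinner t, Finset.prod_const]
    _ = ENNReal.ofReal (1/(S.card+1)) := nu_int_pow S.card

lemma measurable_exists_lt (v : V) (S : Finset V) :
    MeasurableSet {h : V → ℝ | ∃ u ∈ S, h u < h v} := by
  have : {h : V → ℝ | ∃ u ∈ S, h u < h v} = {h : V → ℝ | ∀ u ∈ S, h v ≤ h u}ᶜ := by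
    ext h
    simp [not_le]
  rw [this]
  exact (measurable_all_ge v S).compl

lemma measure_exists_lt (v : V) (S : Finset V) (hvS : v ∉ S) :
    (mu : Measure (V → ℝ)) {h : V → ℝ | ∃ u ∈ S, h u < h v}
      = ENNReal.ofReal (S.card/(S.card+1)) := by
  have hc : {h : V → ℝ | ∃ u ∈ S, h u < h v} = {h : V → ℝ | ∀ u ∈ S, h v ≤ h u}ᶜ := by
    ext h; simp [not_le]
  rw [hc, measure_compl (measurable_all_ge v S) (measure_ne_top _ _),
    measure_all_ge v S hvS, measure_univ]
  have hk : (0:ℝ) ≤ 1/(S.card+1) := by positivity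
  rw [show (1 : ℝ≥0∞) = ENNReal.ofReal 1 from ENNReal.ofReal_one.symm,
    ← ENNReal.ofReal_sub 1 hk]
  congr 1
  have : ((S.card : ℝ) + 1) ≠ 0 := by positivity
  field_simp
  ring

lemma ae_injective :
    ∀ᵐ h ∂(mu : Measure (V → ℝ)), Function.Injective h := by
  classical
  have pair : ∀ i j : V, i ≠ j → (mu : Measure (V → ℝ)) {h : V → ℝ | h i = h j} = 0 := by
    intro i j hij
    set ψ : ℝ → ℝ → ℝ≥0∞ := fun a b => if b = a then 1 else 0 with hψ
    have hψm : Measurable fun p : ℝ × ℝ => ψ p.1 p.2 := by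
      apply Measurable.ite (measurableSet_eq_fun measurable_snd measurable_fst) <;> fun_prop
    have hmeas : MeasurableSet {h : V → ℝ | h i = h j} :=
      measurableSet_eq_fun (measurable_pi_apply i) (measurable_pi_apply j)
    have hind : ∀ h : V → ℝ, ({h : V → ℝ | h i = h j}.indicator
        (1 : (V → ℝ) → ℝ≥0∞)) h = ∏ u ∈ ({j} : Finset V), ψ (h i) (h u) := by
      intro h
      rw [Finset.prod_singleton]
      by_cases hh : h ∈ {h : V → ℝ | h i = h j}
      · rw [Set.indicator_of_mem hh]
        have : h j = h i := (Set.mem_setOf_eq ▸ hh).symm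
        simp [hψ, this]
      · rw [Set.indicator_of_notMem hh]
        have : ¬ (h j = h i) := fun e => hh e.symm
        simp [hψ, this]
    have h1 : (mu : Measure (V → ℝ)) {h : V → ℝ | h i = h j}
        = ∫⁻ h : V → ℝ, ∏ u ∈ ({j} : Finset V), ψ (h i) (h u)
          ∂(Measure.pi fun _ : V => nu) := by
      rw [show (Measure.pi fun _ : V => nu) = mu from rfl, ← lintegral_indicator_one hmeas]
      exact lintegral_congr hind
    rw [h1, lintegral_pair i {j} (by simpa using hij) ψ hψm]
    have : ∀ t : ℝ, ∏ u ∈ ({j} : Finset V), (∫⁻ b, ψ t b ∂nu) = 0 := by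
      intro t
      rw [Finset.prod_singleton]
      have : (fun b => ψ t b) = ({t} : Set ℝ).indicator (1 : ℝ → ℝ≥0∞) := by
        ext b
        rw [Set.indicator_apply]
        simp [hψ, Set.mem_singleton_iff]
      rw [this, lintegral_indicator_one (measurableSet_singleton t), nu_singleton]
    rw [lintegral_congr this]
    simp
  have hsub : {h : V → ℝ | ¬ Function.Injective h}
      ⊆ ⋃ i : V, ⋃ j : V, ⋃ (_ : i ≠ j), {h : V → ℝ | h i = h j} := by
    intro h hh
    simp only [Set.mem_setOf_eq, Function.Injective, not_forall] at hh
    obtain ⟨i, j, heq, hne⟩ := hh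
    exact Set.mem_iUnion.mpr ⟨i, Set.mem_iUnion.mpr ⟨j, Set.mem_iUnion.mpr ⟨hne, heq⟩⟩⟩
  have hnull : (mu : Measure (V → ℝ))
      (⋃ i : V, ⋃ j : V, ⋃ (_ : i ≠ j), {h : V → ℝ | h i = h j}) = 0 := by
    refine measure_iUnion_null fun i => measure_iUnion_null fun j => measure_iUnion_null fun hij => pair i j hij
  rw [ae_iff]
  exact measure_mono_null hsub hnull

end Events

section Arith

lemma quarter_le_pow (d : ℕ) (hd : 1 ≤ d) : (1/4 : ℝ) ≤ ((d:ℝ)/((d:ℝ)+1))^(d+1) := by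
  induction d with
  | zero => omega
  | succ k IH =>
    rcases Nat.lt_or_ge k 1 with hk | hk1
    · have : k = 0 := by omega
      subst this
      norm_num
    · refine le_trans (IH hk1) ?_
      set c := (k:ℝ) with hcdef
      have hc : (1:ℝ) ≤ c := by rw [hcdef]; exact_mod_cast hk1
      have hc0 : 0 < c := by linarith
      have h1 : 0 < c + 1 := by linarith
      have h2 : 0 < c + 2 := by linarith
      set x : ℝ := 1/(c*(c+2)) with hx
      have hx0 : 0 ≤ x := by positivity
      have hA : (c+1)/(c+2) = (c/(c+1)) * (1 + x) := by
        rw [hx]; field_simp; ring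
      have hBer : 1 + ((k:ℝ)+1) * x ≤ (1+x)^(k+1) := by
        have h := one_add_mul_le_pow (a := x) (by linarith) (k+1)
        push_cast at h
        exact h
      have hstep : ((c+2)/(c+1)) ≤ (1+x)^(k+1) := by
        refine le_trans ?_ hBer
        have e1 : 1 + ((k:ℝ)+1)*x = (c*(c+2) + (c+1))/(c*(c+2)) := by
          rw [hx, ← hcdef]; field_simp; try ring
        rw [e1, div_le_div_iff₀ h1 (by positivity)]
        nlinarith
      have hgoal : ((c+1)/(c+2))^(k+2) = (c/(c+1))^(k+1) * ((1+x)^(k+1) * ((c+1)/(c+2))) := by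
        have : ((c+1)/(c+2))^(k+2) = ((c+1)/(c+2))^(k+1) * ((c+1)/(c+2)) := by
          rw [← pow_succ]
        rw [this, hA, mul_pow]
        ring
      have hfac : 1 ≤ (1+x)^(k+1) * ((c+1)/(c+2)) := by
        calc (1:ℝ) = ((c+2)/(c+1)) * ((c+1)/(c+2)) := by field_simp
          _ ≤ (1+x)^(k+1) * ((c+1)/(c+2)) :=
            mul_le_mul_of_nonneg_right hstep (by positivity)
      have final : (c/(c+1))^(k+1) ≤ ((c+1)/(c+2))^(k+2) := by
        rw [hgoal]
        calc (c/(c+1))^(k+1) = (c/(c+1))^(k+1) * 1 := (mul_one _).symm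
          _ ≤ (c/(c+1))^(k+1) * ((1+x)^(k+1) * ((c+1)/(c+2))) :=
            mul_le_mul_of_nonneg_left hfac (by positivity)
      have cast1 : (((k:ℕ)+1:ℕ):ℝ) = c + 1 := by rw [hcdef]; push_cast; ring
      have hbase : (((k+1:ℕ)):ℝ)/((((k+1:ℕ)):ℝ)+1) = (c+1)/(c+2) := by
        rw [cast1]; ring_nf
      rw [hbase]
      exact final
end Arith

section Graph

variable {V : Type*} [Fintype V] [DecidableEq V] (G : SimpleGraph V) [DecidableRel G.Adj]

/-- Closed neighbourhood. -/
def Nb (w : V) : Finset V := insert w (G.neighborFinset w)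

lemma mem_Nb_symm {v w : V} : w ∈ Nb G v ↔ v ∈ Nb G w := by
  simp only [Nb, Finset.mem_insert, SimpleGraph.mem_neighborFinset]
  rw [SimpleGraph.adj_comm, eq_comm]

lemma card_Nb (w : V) : (Nb G w).card = G.degree w + 1 := by
  rw [Nb, Finset.card_insert_of_notMem (G.notMem_neighborFinset_self w),
    G.card_neighborFinset_eq_degree]

/-- The punctured closed neighbourhood of `w`, with `v` removed. -/
def Sw (v w : V) : Finset V := (Nb G w).erase v

lemma card_Sw {v w : V} (hw : w ∈ Nb G v) : (Sw G v w).card = G.degree w := by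
  rw [Sw, Finset.card_erase_of_mem (mem_Nb_symm G |>.mp hw), card_Nb]
  omega

def Bset (v w : V) : Set (V → ℝ) := {h : V → ℝ | ∃ u ∈ Sw G v w, h u < h v}

def Eset (v : V) : Set (V → ℝ) := ⋂ w ∈ Nb G v, Bset G v w

def VotedSet (v : V) : Set (V → ℝ) :=
  {h : V → ℝ | ∃ w ∈ Nb G v, ∀ u ∈ Nb G w, u ≠ v → h v < h u}

lemma measurable_Bset (v w : V) : MeasurableSet (Bset G v w) := measurable_exists_lt v _

lemma measurable_Eset (v : V) : MeasurableSet (Eset G v) :=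
  MeasurableSet.biInter (Finset.countable_toSet _) fun w _ => measurable_Bset G v w

lemma upset_Bset (v w : V) : UpSet2 v (Bset G v w) := by
  rintro g g' h1 h2 ⟨u, hu, hlt⟩
  exact ⟨u, hu, lt_of_le_of_lt (h2 u (Finset.ne_of_mem_erase hu))
    (lt_of_lt_of_le hlt h1)⟩

lemma measurable_Voted (v : V) : MeasurableSet (VotedSet G v) := by
  have : VotedSet G v
      = ⋃ w ∈ Nb G v, ⋂ u ∈ Nb G w, {h : V → ℝ | u ≠ v → h v < h u} := by
    ext h
    simp [VotedSet]
  rw [this]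
  refine Finset.measurableSet_biUnion _ fun w _ =>
    MeasurableSet.biInter (Finset.countable_toSet _) fun u _ => ?_
  by_cases hu : u = v
  · have : {h : V → ℝ | u ≠ v → h v < h u} = Set.univ := by ext h; simp [hu]
    rw [this]; exact MeasurableSet.univ
  · have : {h : V → ℝ | u ≠ v → h v < h u} = {h : V → ℝ | h v < h u} := by
      ext h; simp [hu]
    rw [this]
    exact measurableSet_lt (measurable_pi_apply v) (measurable_pi_apply u)

lemma voted_subset_compl (v : V) : VotedSet G v ⊆ (Eset G v)ᶜ := by
  rintro h ⟨w, hw, hall⟩ hE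
  rw [Eset, Set.mem_iInter₂] at hE
  obtain ⟨u, hu, hlt⟩ := hE w hw
  obtain ⟨hune, huN⟩ := Finset.mem_erase.mp hu
  exact absurd (hall u huN hune) (not_lt.mpr (le_of_lt hlt))

lemma mu_voted_le (v : V) :
    (mu : Measure (V → ℝ)) (VotedSet G v)
      ≤ ENNReal.ofReal (1 - ∏ w ∈ Nb G v, ((G.degree w : ℝ)/((G.degree w : ℝ) + 1))) := by
  have hf0 : ∀ w : V, (0:ℝ) ≤ (G.degree w : ℝ)/((G.degree w : ℝ) + 1) := fun w => by positivity
  have hf1 : ∀ w : V, (G.degree w : ℝ)/((G.degree w : ℝ) + 1) ≤ 1 := fun w => by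
    rw [div_le_one (by positivity)]; linarith
  have hE : ENNReal.ofReal (∏ w ∈ Nb G v, ((G.degree w : ℝ)/((G.degree w : ℝ) + 1)))
      ≤ mu (Eset G v) := by
    rw [ENNReal.ofReal_prod_of_nonneg (fun w _ => hf0 w)]
    refine le_trans (le_of_eq ?_)
      (harris_prod v (Nb G v) (Bset G v) (measurable_Bset G v) (upset_Bset G v))
    refine Finset.prod_congr rfl fun w hw => ?_
    rw [show Bset G v w = {h : V → ℝ | ∃ u ∈ Sw G v w, h u < h v} from rfl,
      measure_exists_lt v (Sw G v w) (by rw [Sw]; exact Finset.notMem_erase v _),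
      card_Sw G hw]
  have hprod0 : (0:ℝ) ≤ ∏ w ∈ Nb G v, ((G.degree w : ℝ)/((G.degree w : ℝ) + 1)) :=
    Finset.prod_nonneg fun w _ => hf0 w
  calc mu (VotedSet G v) ≤ mu ((Eset G v)ᶜ) := measure_mono (voted_subset_compl G v)
    _ = 1 - mu (Eset G v) := by
        rw [measure_compl (measurable_Eset G v) (measure_ne_top _ _), measure_univ]
    _ ≤ 1 - ENNReal.ofReal (∏ w ∈ Nb G v, ((G.degree w : ℝ)/((G.degree w : ℝ) + 1))) :=
        tsub_le_tsub_left hE 1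
    _ = ENNReal.ofReal (1 - ∏ w ∈ Nb G v, ((G.degree w : ℝ)/((G.degree w : ℝ) + 1))) := by
        rw [show (1:ℝ≥0∞) = ENNReal.ofReal 1 from ENNReal.ofReal_one.symm,
          ← ENNReal.ofReal_sub 1 hprod0]

lemma real_bound [Nonempty V] (hiso : ∀ v : V, ∃ w, G.Adj v w) :
    ∑ v : V, (1 - ∏ w ∈ Nb G v, ((G.degree w : ℝ)/((G.degree w : ℝ) + 1)))
      ≤ 3/4 * (Fintype.card V : ℝ) := by
  classical
  set f : V → ℝ := fun w => (G.degree w : ℝ)/((G.degree w : ℝ) + 1) with hfdef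
  set p : V → ℝ := fun v => ∏ w ∈ Nb G v, f w with hpdef
  have hf0 : ∀ w : V, 0 ≤ f w := fun w => by rw [hfdef]; positivity
  have hp0 : ∀ v : V, 0 ≤ p v := fun v => Finset.prod_nonneg fun w _ => hf0 w
  have hprod : ∏ v : V, p v = ∏ w : V, (f w)^(G.degree w + 1) := by
    rw [hpdef]
    rw [Finset.prod_comm' (t' := Finset.univ) (s' := fun w => Nb G w)
      (fun v w => by simp [mem_Nb_symm G])]
    refine Finset.prod_congr rfl fun w _ => ?_
    rw [Finset.prod_const, card_Nb]
  have hkey : ∀ w : V, (1/4:ℝ) ≤ (f w)^(G.degree w + 1) := by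
    intro w
    have hd : 1 ≤ G.degree w := (G.degree_pos_iff_exists_adj w).mpr (hiso w)
    exact quarter_le_pow _ hd
  set n := Fintype.card V with hndef
  have hn : 0 < n := Fintype.card_pos
  have hnR : (0:ℝ) < n := by exact_mod_cast hn
  have hprodge : ((1:ℝ)/4)^n ≤ ∏ v : V, p v := by
    rw [hprod]
    calc ((1:ℝ)/4)^n = ∏ _w : V, (1/4:ℝ) := by
          rw [Finset.prod_const, Finset.card_univ]
      _ ≤ ∏ w : V, (f w)^(G.degree w + 1) :=
          Finset.prod_le_prod (fun _ _ => by norm_num) (fun w _ => hkey w)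
  have hwsum : ∑ _v : V, ((n:ℝ))⁻¹ = 1 := by
    rw [Finset.sum_const, Finset.card_univ, ← hndef, nsmul_eq_mul]
    field_simp
  have hamgm := Real.geom_mean_le_arith_mean_weighted Finset.univ
    (fun _ => ((n:ℝ))⁻¹) p (fun _ _ => by positivity) hwsum (fun v _ => hp0 v)
  have hlhs : (1/4 : ℝ) ≤ ∏ v : V, (p v) ^ (((n:ℝ))⁻¹) := by
    rw [Real.finset_prod_rpow _ _ (fun v _ => hp0 v) _]
    have step : ((1:ℝ)/4) = (((1:ℝ)/4)^(n:ℕ) : ℝ)^(((n:ℝ))⁻¹) := by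
      rw [← Real.rpow_natCast ((1:ℝ)/4) n, ← Real.rpow_mul (by norm_num),
        mul_inv_cancel₀ (ne_of_gt hnR), Real.rpow_one]
    rw [step]
    exact Real.rpow_le_rpow (by positivity) hprodge (by positivity)
  have hsum : (1/4:ℝ) ≤ ((n:ℝ))⁻¹ * ∑ v : V, p v := by
    calc (1/4:ℝ) ≤ ∏ v : V, (p v) ^ (((n:ℝ))⁻¹) := hlhs
      _ ≤ ∑ v : V, ((n:ℝ))⁻¹ * p v := hamgm
      _ = ((n:ℝ))⁻¹ * ∑ v : V, p v := (Finset.mul_sum _ _ _).symm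
  have hsum' : (n:ℝ)/4 ≤ ∑ v : V, p v := by
    calc (n:ℝ)/4 = n * (1/4) := by ring
      _ ≤ n * (((n:ℝ))⁻¹ * ∑ v : V, p v) :=
          mul_le_mul_of_nonneg_left hsum (le_of_lt hnR)
      _ = ∑ v : V, p v := by
          field_simp
  calc ∑ v : V, (1 - p v) = ∑ _v : V, (1:ℝ) - ∑ v : V, p v := Finset.sum_sub_distrib _ _
    _ = (n:ℝ) - ∑ v : V, p v := by
        rw [Finset.sum_const, Finset.card_univ, ← hndef, nsmul_eq_mul, mul_one]
    _ ≤ (n:ℝ) - (n:ℝ)/4 := by linarith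
    _ = 3/4 * (n:ℝ) := by ring

end Graph

section Final

variable {V : Type*} [Fintype V] [DecidableEq V] (G : SimpleGraph V) [DecidableRel G.Adj]

lemma card_le_sum_indicator (r : (V → ℝ) → V → V)
    (hr : ∀ h : V → ℝ, Function.Injective h → ∀ v : V,
      r h v ∈ insert v (G.neighborFinset v) ∧
      ∀ w ∈ insert v (G.neighborFinset v), h (r h v) ≤ h w)
    (h : V → ℝ) (hinj : Function.Injective h) :
    ((Finset.univ.image (r h)).card : ℝ≥0∞)
      ≤ ∑ v : V, (VotedSet G v).indicator (1 : (V → ℝ) → ℝ≥0∞) h := by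
  classical
  have hsub : Finset.univ.image (r h)
      ⊆ Finset.univ.filter (fun v => h ∈ VotedSet G v) := by
    intro x hx
    obtain ⟨w, -, rfl⟩ := Finset.mem_image.mp hx
    obtain ⟨hmem, hmin⟩ := hr h hinj w
    refine Finset.mem_filter.mpr ⟨Finset.mem_univ _, ⟨w, ?_, ?_⟩⟩
    · exact (mem_Nb_symm G).mpr hmem
    · intro u hu hne
      refine lt_of_le_of_ne (hmin u hu) fun heq => hne ?_
      exact (hinj heq).symm
  have hcard := Finset.card_le_card hsub
  calc ((Finset.univ.image (r h)).card : ℝ≥0∞)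
      ≤ ((Finset.univ.filter (fun v => h ∈ VotedSet G v)).card : ℝ≥0∞) := by
        exact_mod_cast hcard
    _ = ∑ v : V, (VotedSet G v).indicator (1 : (V → ℝ) → ℝ≥0∞) h := by
        rw [Finset.card_filter, Nat.cast_sum]
        refine Finset.sum_congr rfl fun v _ => ?_
        rw [Set.indicator_apply]
        split <;> simp

theorem main_result [Nonempty V]
    (hiso : ∀ v : V, ∃ w, G.Adj v w)
    (r : (V → ℝ) → V → V)
    (hr : ∀ h : V → ℝ, Function.Injective h → ∀ v : V,
      r h v ∈ insert v (G.neighborFinset v) ∧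
      ∀ w ∈ insert v (G.neighborFinset v), h (r h v) ≤ h w) :
    ∫⁻ h : V → ℝ, ((Finset.univ.image (r h)).card : ENNReal)
        ∂(Measure.pi fun _ : V => volume.restrict (Set.Icc (0 : ℝ) 1)) ≤
      (3 / 4 : ENNReal) * (Fintype.card V : ENNReal) := by
  classical
  have hmeasure : (Measure.pi fun _ : V => volume.restrict (Set.Icc (0 : ℝ) 1))
      = (mu : Measure (V → ℝ)) := rfl
  rw [hmeasure]
  have hp1 : ∀ v : V, ∏ w ∈ Nb G v, ((G.degree w : ℝ)/((G.degree w : ℝ) + 1)) ≤ 1 := by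
    intro v
    refine Finset.prod_le_one (fun w _ => by positivity) (fun w _ => ?_)
    rw [div_le_one (by positivity)]; linarith
  calc ∫⁻ h : V → ℝ, ((Finset.univ.image (r h)).card : ℝ≥0∞) ∂(mu : Measure (V → ℝ))
      ≤ ∫⁻ h : V → ℝ, ∑ v : V, (VotedSet G v).indicator (1 : (V → ℝ) → ℝ≥0∞) h
          ∂(mu : Measure (V → ℝ)) := by
        refine lintegral_mono_ae (ae_injective.mono fun h hinj => ?_)
        exact card_le_sum_indicator G r hr h hinj
    _ = ∑ v : V, (mu : Measure (V → ℝ)) (VotedSet G v) := by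
        rw [lintegral_finset_sum _ fun v _ => measurable_one.indicator (measurable_Voted G v)]
        exact Finset.sum_congr rfl fun v _ => lintegral_indicator_one (measurable_Voted G v)
    _ ≤ ∑ v : V, ENNReal.ofReal
          (1 - ∏ w ∈ Nb G v, ((G.degree w : ℝ)/((G.degree w : ℝ) + 1))) :=
        Finset.sum_le_sum fun v _ => mu_voted_le G v
    _ = ENNReal.ofReal (∑ v : V,
          (1 - ∏ w ∈ Nb G v, ((G.degree w : ℝ)/((G.degree w : ℝ) + 1)))) :=
        (ENNReal.ofReal_sum_of_nonneg fun v _ => by linarith [hp1 v]).symm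
    _ ≤ ENNReal.ofReal (3/4 * (Fintype.card V : ℝ)) :=
        ENNReal.ofReal_le_ofReal (real_bound G hiso)
    _ ≤ (3 / 4 : ℝ≥0∞) * (Fintype.card V : ℝ≥0∞) := by
        rw [ENNReal.ofReal_mul (by norm_num), ENNReal.ofReal_natCast]
        gcongr
        rw [show (3/4 : ℝ) = (3:ℝ)/(4:ℝ) from rfl, ENNReal.ofReal_div_of_pos (by norm_num)]
        simp [ENNReal.ofReal_ofNat]

end Final

end RepAux

open MeasureTheory

/-- For a finite graph without isolated vertices and i.i.d. uniform labels
`h : V → [0,1]` (modelled by the product of uniform measures on `[0,1]`), if for every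
injective labelling `h` the map `r h` picks the vertex of minimum label in each closed
neighbourhood, then the expected number of vertices in the image of `r h` is at most
`(3/4)|V|`. -/
theorem stmt_0 {V : Type*} [Fintype V] [DecidableEq V] [Nonempty V]
    (G : SimpleGraph V) [DecidableRel G.Adj]
    (hiso : ∀ v : V, ∃ w, G.Adj v w)
    (r : (V → ℝ) → V → V)
    (hr : ∀ h : V → ℝ, Function.Injective h → ∀ v : V,
      r h v ∈ insert v (G.neighborFinset v) ∧
      ∀ w ∈ insert v (G.neighborFinset v), h (r h v) ≤ h w) :
    ∫⁻ h : V → ℝ, ((Finset.univ.image (r h)).card : ENNReal)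
        ∂(Measure.pi fun _ : V => volume.restrict (Set.Icc (0 : ℝ) 1)) ≤
      (3 / 4 : ENNReal) * (Fintype.card V : ENNReal) := by
  exact RepAux.main_result G hiso r hr
end

section
/- Let G = (V, E) be a finite undirected graph without isolated vertices, and let L : V → {1, …, |V|} be a labelling chosen uniformly at random among all bijections. Define r(v) = argmin over w in N[v] of L(w). Then the expected number of vertices in the image of r is at most (2/3)|V|. -/
open Finset

set_option linter.unusedSectionVars false
set_option linter.unusedVariables false
set_option maxHeartbeats 1000000

section Aux

variable {V : Type*} [Fintype V] [DecidableEq V]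

lemma swap_mem_S {S : Finset V} {x y : V} (hx : x ∈ S) (hy : y ∈ S) :
    ∀ z ∈ S, Equiv.swap x y z ∈ S := by
  intro z hz
  rcases eq_or_ne z x with rfl|h1
  · rwa [Equiv.swap_apply_left]
  rcases eq_or_ne z y with rfl|h2
  · rwa [Equiv.swap_apply_right]
  · rwa [Equiv.swap_apply_of_ne_of_ne h1 h2]

lemma count_lt (u w : V) (huw : u ≠ w) :
    2 * (Finset.univ.filter
      (fun L : V ≃ Fin (Fintype.card V) => L u < L w)).card
      ≤ Fintype.card (V ≃ Fin (Fintype.card V)) := by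
  classical
  set n := Fintype.card V
  set A := Finset.univ.filter (fun L : V ≃ Fin n => L u < L w) with hA
  set A' := Finset.univ.filter (fun L : V ≃ Fin n => L w < L u) with hA'
  have hcard : A.card = A'.card := by
    apply Finset.card_bij' (fun L _ => (Equiv.swap u w).trans L)
      (fun L _ => (Equiv.swap u w).trans L)
    · intro L hL
      simp only [hA, hA', Finset.mem_filter, Finset.mem_univ, true_and] at hL ⊢
      simpa [Equiv.trans_apply, Equiv.swap_apply_left, Equiv.swap_apply_right] using hL
    · intro L hL
      simp only [hA, hA', Finset.mem_filter, Finset.mem_univ, true_and] at hL ⊢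
      simpa [Equiv.trans_apply, Equiv.swap_apply_left, Equiv.swap_apply_right] using hL
    · intro L _
      ext x
      simp [Equiv.trans_apply, Equiv.swap_apply_self]
    · intro L _
      ext x
      simp [Equiv.trans_apply, Equiv.swap_apply_self]
  have hdisj : Disjoint A A' := by
    rw [Finset.disjoint_left]
    intro L hL hL'
    simp only [hA, hA', Finset.mem_filter] at hL hL'
    exact absurd hL'.2 (not_lt.mpr hL.2.le)
  calc 2 * A.card = A.card + A'.card := by omega
    _ = (A ∪ A').card := (Finset.card_union_of_disjoint hdisj).symm
    _ ≤ (Finset.univ : Finset (V ≃ Fin n)).card := Finset.card_le_card (Finset.subset_univ _)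
    _ = Fintype.card (V ≃ Fin n) := Finset.card_univ

lemma count_min2 (S : Finset V) (a b : V) (ha : a ∈ S) (hb : b ∈ S) (hab : a ≠ b) :
    (Finset.univ.filter (fun L : V ≃ Fin (Fintype.card V) =>
        L b < L a ∧ ∀ y ∈ S, y ≠ b → L a ≤ L y)).card * (S.card * (S.card - 1))
      ≤ Fintype.card (V ≃ Fin (Fintype.card V)) := by
  classical
  set n := Fintype.card V with hn
  set E := Finset.univ.filter (fun L : V ≃ Fin n =>
      L b < L a ∧ ∀ y ∈ S, y ≠ b → L a ≤ L y) with hE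
  set σ : V → V → (V ≃ V) := fun p q =>
    (Equiv.swap q (Equiv.swap b p a)).trans (Equiv.swap b p) with hσ
  have hσq : ∀ p q : V, σ p q q = a := by
    intro p q
    simp only [hσ, Equiv.trans_apply, Equiv.swap_apply_left, Equiv.swap_apply_self]
  have hσp : ∀ p q : V, p ≠ q → σ p q p = b := by
    intro p q hpq
    simp only [hσ, Equiv.trans_apply]
    rcases eq_or_ne p a with rfl|hpa
    · rw [Equiv.swap_apply_right, Equiv.swap_apply_of_ne_of_ne hpq hab,
        Equiv.swap_apply_right]
    · rw [Equiv.swap_apply_of_ne_of_ne hab (fun h => hpa h.symm),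
        Equiv.swap_apply_of_ne_of_ne hpq hpa, Equiv.swap_apply_right]
  have hσS : ∀ p ∈ S, ∀ q ∈ S, ∀ z ∈ S, σ p q z ∈ S := by
    intro p hp q hq z hz
    simp only [hσ, Equiv.trans_apply]
    exact swap_mem_S hb hp _ (swap_mem_S hq (swap_mem_S hb hp _ ha) _ hz)
  have hinj : (E ×ˢ S.offDiag).card ≤ Fintype.card (V ≃ Fin n) := by
    rw [← Finset.card_univ]
    apply Finset.card_le_card_of_injOn
      (fun z => (σ z.2.1 z.2.2).trans z.1)
      (fun _ _ => Finset.mem_univ _)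
    rintro ⟨L₁, p₁, q₁⟩ h₁ ⟨L₂, p₂, q₂⟩ h₂ heq
    simp only [Finset.coe_mem, Finset.mem_coe, Finset.mem_product, Finset.mem_offDiag] at h₁ h₂
    obtain ⟨hL₁, hp₁, hq₁, hpq₁⟩ := h₁
    obtain ⟨hL₂, hp₂, hq₂, hpq₂⟩ := h₂
    simp only [hE, Finset.mem_filter, Finset.mem_univ, true_and] at hL₁ hL₂
    obtain ⟨hba₁, hmin₁⟩ := hL₁
    obtain ⟨hba₂, hmin₂⟩ := hL₂
    simp only at heq
    have key : ∀ (L : V ≃ Fin n) (p q : V), p ∈ S → q ∈ S → p ≠ q →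
        (L b < L a ∧ ∀ y ∈ S, y ≠ b → L a ≤ L y) →
        (∀ y ∈ S, ((σ p q).trans L) p ≤ ((σ p q).trans L) y)
        ∧ (∀ y ∈ S, y ≠ p → ((σ p q).trans L) q ≤ ((σ p q).trans L) y) := by
      intro L p q hp hq hpq hLE
      obtain ⟨hba, hmin⟩ := hLE
      have hLb : ∀ z ∈ S, L b ≤ L z := by
        intro z hz
        rcases eq_or_ne z b with rfl|hzb
        · exact le_refl _
        · exact hba.le.trans (hmin z hz hzb)
      constructor
      · intro y hy
        simp only [Equiv.trans_apply, hσp p q hpq]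
        exact hLb _ (hσS p hp q hq y hy)
      · intro y hy hyp
        simp only [Equiv.trans_apply, hσq p q]
        have hσyb : σ p q y ≠ b := by
          intro h
          exact hyp ((σ p q).injective (h.trans (hσp p q hpq).symm))
        exact hmin _ (hσS p hp q hq y hy) hσyb
    obtain ⟨hP₁, hQ₁⟩ := key L₁ p₁ q₁ hp₁ hq₁ hpq₁ ⟨hba₁, hmin₁⟩
    obtain ⟨hP₂, hQ₂⟩ := key L₂ p₂ q₂ hp₂ hq₂ hpq₂ ⟨hba₂, hmin₂⟩
    rw [heq] at hP₁ hQ₁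
    have hpp : p₁ = p₂ := by
      have h1 := hP₁ p₂ hp₂
      have h2 := hP₂ p₁ hp₁
      exact ((σ p₂ q₂).trans L₂).injective (le_antisymm h2 h1).symm
    rw [hpp] at hQ₁ hpq₁
    have hqq : q₁ = q₂ := by
      have h1 := hQ₁ q₂ hq₂ (fun h => hpq₂ h.symm)
      have h2 := hQ₂ q₁ hq₁ (fun h => hpq₁ h.symm)
      exact ((σ p₂ q₂).trans L₂).injective (le_antisymm h2 h1).symm
    rw [hpp, hqq] at heq
    have hLL : L₁ = L₂ := by
      ext x
      have h := DFunLike.congr_fun heq ((σ p₂ q₂).symm x)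
      have h2 : L₁ x = L₂ x := by
        simpa [Equiv.trans_apply, Equiv.apply_symm_apply] using h
      exact congrArg Fin.val h2
    simp [hpp, hqq, hLL]
  have hod : S.card * (S.card - 1) = S.offDiag.card := by
    rw [Finset.offDiag_card]
    rcases Nat.eq_zero_or_pos S.card with h|h
    · simp [h]
    · obtain ⟨m, hm⟩ : ∃ m, S.card = m + 1 := ⟨S.card - 1, by omega⟩
      rw [hm, Nat.add_sub_cancel, show (m+1)*(m+1) = (m+1)*m + (m+1) from by ring,
        Nat.add_sub_cancel]
  calc E.card * (S.card * (S.card - 1))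
      = E.card * S.offDiag.card := by rw [hod]
    _ = (E ×ˢ S.offDiag).card := (Finset.card_product _ _).symm
    _ ≤ Fintype.card (V ≃ Fin n) := hinj

end Aux

/-- For a finite graph without isolated vertices and a uniformly random bijective
labelling `L : V ≃ Fin |V|`, with `r L v` the vertex of minimum label in the closed
neighbourhood `N[v]`, the expected number of vertices in the image of `r L` is at
most `(2/3)|V|`. -/
theorem stmt_1 {V : Type*} [Fintype V] [DecidableEq V]
    (G : SimpleGraph V) [DecidableRel G.Adj]
    (hiso : ∀ v : V, ∃ w, G.Adj v w)
    (r : (V ≃ Fin (Fintype.card V)) → V → V)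
    (hr : ∀ L : V ≃ Fin (Fintype.card V), ∀ v : V,
      r L v ∈ insert v (G.neighborFinset v) ∧
      ∀ w ∈ insert v (G.neighborFinset v), L (r L v) ≤ L w) :
    (∑ L : V ≃ Fin (Fintype.card V), ((Finset.univ.image (r L)).card : ℚ)) /
        (Fintype.card (V ≃ Fin (Fintype.card V)) : ℚ) ≤
      (2 / 3 : ℚ) * (Fintype.card V : ℚ) := by
  classical
  set Q := (Fintype.card (V ≃ Fin (Fintype.card V)) : ℚ) with hQ
  have hQpos : 0 < Q := by
    have : Nonempty (V ≃ Fin (Fintype.card V)) := ⟨Fintype.equivFin V⟩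
    rw [hQ]
    exact_mod_cast Fintype.card_pos
  rw [div_le_iff₀ hQpos]
  choose w hw using hiso
  have hmem : ∀ x y : V, y ∈ G.neighborFinset x ↔ G.Adj x y := by
    intro x y
    simp [SimpleGraph.mem_neighborFinset]
  set d : V → ℕ := fun v => (G.neighborFinset v).card with hd
  set g : V → ℚ := fun v => Q / (((d v : ℚ) + 2) * ((d v : ℚ) + 1)) with hg
  have hdpos : ∀ v, 1 ≤ d v := by
    intro v
    simp only [hd]
    exact Finset.card_pos.mpr ⟨w v, (hmem _ _).mpr (hw v)⟩
  have hgnn : ∀ v, 0 ≤ g v := by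
    intro v
    simp only [hg]
    positivity
  set A : V → Finset (V ≃ Fin (Fintype.card V)) :=
    fun u => Finset.univ.filter (fun L => L u < L (w u)) with hA
  set B : V → V → Finset (V ≃ Fin (Fintype.card V)) := fun u v => Finset.univ.filter
    (fun L => L (w u) < L u ∧ ∀ y ∈ insert v (G.neighborFinset v), L u ≤ L y) with hB
  set C : V → Finset V := fun u =>
    (G.neighborFinset u).filter (fun v => w u ∉ insert v (G.neighborFinset v)) with hC
  -- Step 1 : exchange sums
  have h1 : (∑ L : V ≃ Fin (Fintype.card V), ((Finset.univ.image (r L)).card : ℚ))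
      = ∑ u : V, ((Finset.univ.filter
          (fun L : V ≃ Fin (Fintype.card V) => u ∈ Finset.univ.image (r L))).card : ℚ) := by
    have hL : ∀ L : V ≃ Fin (Fintype.card V), ((Finset.univ.image (r L)).card : ℚ)
        = ∑ u : V, (if u ∈ Finset.univ.image (r L) then (1:ℚ) else 0) := by
      intro L
      rw [Finset.sum_ite_mem, Finset.univ_inter, Finset.sum_const, nsmul_eq_mul, mul_one]
    simp_rw [hL]
    rw [Finset.sum_comm]
    congr 1
    ext u
    rw [Finset.sum_boole]
  rw [h1]
  -- Step 2 : per-vertex event inclusion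
  have h2 : ∀ u : V, (Finset.univ.filter
      (fun L : V ≃ Fin (Fintype.card V) => u ∈ Finset.univ.image (r L))).card
      ≤ (A u).card + ∑ v ∈ C u, (B u v).card := by
    intro u
    have hsub : Finset.univ.filter (fun L : V ≃ Fin (Fintype.card V) => u ∈ Finset.univ.image (r L))
        ⊆ A u ∪ (C u).biUnion (B u) := by
      intro L hL
      rw [Finset.mem_filter] at hL
      obtain ⟨-, hmemL⟩ := hL
      obtain ⟨v, -, hv⟩ := Finset.mem_image.mp hmemL
      rcases lt_or_ge (L u) (L (w u)) with hlt|hle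
      · refine Finset.mem_union_left _ ?_
        simp only [hA, Finset.mem_filter, Finset.mem_univ, true_and]
        exact hlt
      · have hune : u ≠ w u := (hw u).ne
        have hlt : L (w u) < L u :=
          lt_of_le_of_ne hle (fun h => hune (L.injective h.symm))
        have hwnot : w u ∉ insert v (G.neighborFinset v) := by
          intro hmemw
          have hle2 := (hr L v).2 (w u) hmemw
          rw [hv] at hle2
          exact absurd hle2 (not_le.mpr hlt)
        have huv : u ∈ insert v (G.neighborFinset v) := hv ▸ (hr L v).1
        have hunev : u ≠ v := by
          rintro rfl
          exact hwnot (Finset.mem_insert_of_mem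
            ((hmem _ _).mpr (hw u)))
        have hadj : G.Adj v u := (hmem _ _).mp
          (Finset.mem_of_mem_insert_of_ne huv hunev)
        refine Finset.mem_union_right _ (Finset.mem_biUnion.mpr ⟨v, ?_, ?_⟩)
        · simp only [hC, Finset.mem_filter]
          exact ⟨(hmem _ _).mpr hadj.symm, hwnot⟩
        · simp only [hB, Finset.mem_filter, Finset.mem_univ, true_and]
          refine ⟨hlt, ?_⟩
          intro y hy
          have hle3 := (hr L v).2 y hy
          rwa [hv] at hle3
    calc (Finset.univ.filter (fun L : V ≃ Fin (Fintype.card V) => u ∈ Finset.univ.image (r L))).card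
        ≤ (A u ∪ (C u).biUnion (B u)).card := Finset.card_le_card hsub
      _ ≤ (A u).card + ((C u).biUnion (B u)).card := Finset.card_union_le _ _
      _ ≤ (A u).card + ∑ v ∈ C u, (B u v).card :=
          Nat.add_le_add_left Finset.card_biUnion_le _
  -- Step 3 : A bound
  have h3 : ∀ u : V, ((A u).card : ℚ) ≤ Q / 2 := by
    intro u
    rw [le_div_iff₀ (by norm_num : (0:ℚ) < 2), hQ]
    have hcl := count_lt u (w u) (hw u).ne
    simp only [hA]
    rw [mul_comm]
    exact_mod_cast hcl
  -- Step 4 : B bound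
  have h4 : ∀ u : V, ∀ v ∈ C u, ((B u v).card : ℚ) ≤ g v := by
    intro u v hvC
    simp only [hC, Finset.mem_filter] at hvC
    obtain ⟨hvnbr, hwnot⟩ := hvC
    set S : Finset V := insert (w u) (insert v (G.neighborFinset v)) with hS
    have hadj : G.Adj u v := (hmem _ _).mp hvnbr
    have haS : u ∈ S := Finset.mem_insert_of_mem
      (Finset.mem_insert_of_mem ((hmem _ _).mpr hadj.symm))
    have hbS : w u ∈ S := Finset.mem_insert_self _ _
    have hScard : S.card = d v + 2 := by
      simp only [hS, hd]
      rw [Finset.card_insert_of_notMem hwnot,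
        Finset.card_insert_of_notMem (SimpleGraph.notMem_neighborFinset_self G v)]
    have hkey := count_min2 S u (w u) haS hbS (hw u).ne
    have hsub : B u v ⊆ Finset.univ.filter (fun L : V ≃ Fin (Fintype.card V) =>
        L (w u) < L u ∧ ∀ y ∈ S, y ≠ w u → L u ≤ L y) := by
      intro L hL
      simp only [hB, Finset.mem_filter, Finset.mem_univ, true_and] at hL ⊢
      obtain ⟨hlt, hmin⟩ := hL
      refine ⟨hlt, ?_⟩
      intro y hy hyne
      exact hmin y (Finset.mem_of_mem_insert_of_ne hy hyne)
    have hcount : (B u v).card * ((d v + 2) * (d v + 1)) ≤ Fintype.card (V ≃ Fin (Fintype.card V)) := by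
      have h5 : S.card * (S.card - 1) = (d v + 2) * (d v + 1) := by
        rw [hScard]
        congr 1
      calc (B u v).card * ((d v + 2) * (d v + 1))
          ≤ (Finset.univ.filter (fun L : V ≃ Fin (Fintype.card V) =>
              L (w u) < L u ∧ ∀ y ∈ S, y ≠ w u → L u ≤ L y)).card
              * ((d v + 2) * (d v + 1)) :=
            Nat.mul_le_mul_right _ (Finset.card_le_card hsub)
        _ ≤ Fintype.card (V ≃ Fin (Fintype.card V)) := by rw [← h5]; exact hkey
    simp only [hg]
    rw [le_div_iff₀ (by positivity), hQ]
    exact_mod_cast hcount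
  -- Step 5 : per-u bound in ℚ
  have h5 : ∀ u : V, ((Finset.univ.filter
      (fun L : V ≃ Fin (Fintype.card V) => u ∈ Finset.univ.image (r L))).card : ℚ)
      ≤ Q / 2 + ∑ v ∈ G.neighborFinset u, g v := by
    intro u
    have hcast : ((Finset.univ.filter
        (fun L : V ≃ Fin (Fintype.card V) => u ∈ Finset.univ.image (r L))).card : ℚ)
        ≤ ((A u).card : ℚ) + ∑ v ∈ C u, ((B u v).card : ℚ) := by
      have h := h2 u
      push_cast
      exact_mod_cast h
    refine hcast.trans (add_le_add (h3 u) ?_)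
    calc ∑ v ∈ C u, ((B u v).card : ℚ)
        ≤ ∑ v ∈ C u, g v := Finset.sum_le_sum (h4 u)
      _ ≤ ∑ v ∈ G.neighborFinset u, g v := by
          apply Finset.sum_le_sum_of_subset_of_nonneg
          · simp only [hC]
            exact Finset.filter_subset _ _
          · intro v _ _
            exact hgnn v
  -- Step 6 : exchange the double sum
  have h6 : ∑ u : V, ∑ v ∈ G.neighborFinset u, g v = ∑ v : V, (d v : ℚ) * g v := by
    have hstep : ∀ u : V, ∑ v ∈ G.neighborFinset u, g v
        = ∑ v : V, if G.Adj u v then g v else 0 := by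
      intro u
      rw [SimpleGraph.neighborFinset_eq_filter, Finset.sum_filter]
    simp_rw [hstep]
    rw [Finset.sum_comm]
    refine Finset.sum_congr rfl (fun v _ => ?_)
    have hcomm : (∑ u : V, if G.Adj u v then g v else 0)
        = ∑ u : V, if G.Adj v u then g v else 0 :=
      Finset.sum_congr rfl (fun u _ => if_congr (G.adj_comm u v) rfl rfl)
    rw [hcomm, ← Finset.sum_filter, ← SimpleGraph.neighborFinset_eq_filter, Finset.sum_const,
      nsmul_eq_mul]
  -- Step 7 : per-v bound
  have h7 : ∀ v : V, (d v : ℚ) * g v ≤ Q / 6 := by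
    intro v
    have h1q : (1:ℚ) ≤ (d v : ℚ) := by exact_mod_cast hdpos v
    have hds : (6:ℚ) * (d v : ℚ) ≤ ((d v : ℚ) + 2) * ((d v : ℚ) + 1) := by
      rcases eq_or_lt_of_le (hdpos v) with h|h
      · rw [← h]
        norm_num
      · have h2 : (2:ℚ) ≤ (d v : ℚ) := by exact_mod_cast h
        nlinarith
    have hpos : (0:ℚ) < ((d v : ℚ) + 2) * ((d v : ℚ) + 1) := by positivity
    simp only [hg]
    rw [← mul_div_assoc, div_le_div_iff₀ hpos (by norm_num : (0:ℚ) < 6)]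
    nlinarith [mul_le_mul_of_nonneg_left hds hQpos.le]
  -- Final assembly
  calc ∑ u : V, ((Finset.univ.filter
        (fun L : V ≃ Fin (Fintype.card V) => u ∈ Finset.univ.image (r L))).card : ℚ)
      ≤ ∑ u : V, (Q / 2 + ∑ v ∈ G.neighborFinset u, g v) :=
        Finset.sum_le_sum (fun u _ => h5 u)
    _ = (Fintype.card V : ℚ) * (Q / 2) + ∑ v : V, (d v : ℚ) * g v := by
        rw [Finset.sum_add_distrib, Finset.sum_const, Finset.card_univ, nsmul_eq_mul, h6]
    _ ≤ (Fintype.card V : ℚ) * (Q / 2) + ∑ _v : V, Q / 6 := by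
        refine add_le_add_right (Finset.sum_le_sum (fun v _ => h7 v)) _
    _ = (Fintype.card V : ℚ) * (Q / 2) + (Fintype.card V : ℚ) * (Q / 6) := by
        rw [Finset.sum_const, Finset.card_univ, nsmul_eq_mul]
    _ = 2 / 3 * (Fintype.card V : ℚ) * Q := by ring
end

section
/- Let G = (V, E) be a finite undirected graph and r : V → V a map with r(v) ∈ N[v] for all v (each vertex's representative lies in its closed neighbourhood). Define the contracted graph G' on vertex set r(V) with edges {(r(v), r(w)) : (v,w) ∈ E, r(v) ≠ r(w)}. Then two vertices u, v ∈ V lie in the same connected component of G if and only if r(u) and r(v) lie in the same connected component of G'. -/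
/-- The contracted graph `G'`: vertices are the representatives and an edge joins
`r v` and `r w` whenever `(v, w)` is an edge of `G` with `r v ≠ r w`. -/
def contractedGraph {V : Type*} (G : SimpleGraph V) (r : V → V) : SimpleGraph V where
  Adj a b := a ≠ b ∧ ∃ v w : V, G.Adj v w ∧ r v = a ∧ r w = b
  symm := ⟨by
    rintro a b ⟨hab, v, w, hvw, hv, hw⟩
    exact ⟨hab.symm, w, v, hvw.symm, hw, hv⟩⟩
  loopless := ⟨by rintro a ⟨h, -⟩; exact h rfl⟩

/-- One contraction step preserves connectivity: if every vertex's representative lies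
in its closed neighbourhood, then `u` and `v` lie in the same connected component of
`G` iff `r u` and `r v` lie in the same connected component of the contracted graph. -/
theorem stmt_8 {V : Type*} [Fintype V] (G : SimpleGraph V) (r : V → V)
    (hr : ∀ v : V, r v = v ∨ G.Adj v (r v)) :
    ∀ u v : V, G.Reachable u v ↔ (contractedGraph G r).Reachable (r u) (r v) := by
  have hvr : ∀ v : V, G.Reachable v (r v) := by
    intro v
    rcases hr v with h | h
    · rw [h]
    · exact h.reachable
  intro u v
  constructor
  · rintro ⟨w⟩
    induction w with
    | nil => rfl
    | cons h p ih =>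
      rename_i a b c
      by_cases hab : r a = r b
      · rw [hab]; exact ih
      · have hadj : (contractedGraph G r).Adj (r a) (r b) := ⟨hab, a, b, h, rfl, rfl⟩
        exact hadj.reachable.trans ih
  · intro hc
    have key : ∀ a b : V, (contractedGraph G r).Reachable a b → G.Reachable a b := by
      rintro a b ⟨w⟩
      induction w with
      | nil => rfl
      | cons h p ih =>
        obtain ⟨-, x, y, hxy, hx, hy⟩ := h
        have h1 : G.Reachable _ _ := ((hvr x).symm.trans hxy.reachable).trans (hvr y)
        rw [hx, hy] at h1
        exact h1.trans ih
    exact ((hvr u).trans (key _ _ hc)).trans (hvr v).symm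
end
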